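/- For every Borel probability measure F on valuation profiles, every menu 𝓜 and every 1 ≤ k ≤ N, E_F[Rᵏ_𝓜(v)] ≥ E_{F̄}[max_{X ∈ 𝓑(𝓜)} Σ_{b∈X} v_b] − (k−1)·|𝓜|·v̄/N, where F̄ = (1/N)Σₙ Fₙ is the average of the N bidder-marginals of F. -/

import Mathlib

open MeasureTheory
open scoped ENNReal BigOperators

namespace RankGuaranteedAuctions

/-- A bundle of items, where the set of items is `Fin M`. -/
abbrev Bundle (M : ℕ) := Finset (Fin M)

/-- A valuation assigns a real value to every bundle. -/
abbrev Valuation (M : ℕ) := Bundle M → ℝ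

/-- A valuation is normalized: value `0` for the empty bundle and values in `[0, vbar]`. -/
def IsValuation (M : ℕ) (vbar : ℝ) (v : Valuation M) : Prop :=
  v ∅ = 0 ∧ ∀ b : Bundle M, 0 ≤ v b ∧ v b ≤ vbar

/-- A menu is a nonempty collection of nonempty bundles. -/
def IsMenu (M : ℕ) (Menu : Finset (Bundle M)) : Prop :=
  Menu.Nonempty ∧ ∅ ∉ Menu

/-- The complete menu `2^S` of all nonempty bundles. -/
noncomputable def completeMenu (M : ℕ) : Finset (Bundle M) :=
  Finset.univ.erase ∅

/-- A feasible allocation: a set of pairwise disjoint bundles from the menu. -/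
def Feasible (M : ℕ) (Menu X : Finset (Bundle M)) : Prop :=
  X ⊆ Menu ∧ ∀ b ∈ X, ∀ b' ∈ X, b ≠ b' → Disjoint b b'

/-- The maximum of `∑ b ∈ X, f b` over feasible allocations `X` from the menu. -/
noncomputable def maxAlloc (M : ℕ) (Menu : Finset (Bundle M)) (f : Bundle M → ℝ) : ℝ :=
  sSup {y : ℝ | ∃ X : Finset (Bundle M), Feasible M Menu X ∧ y = ∑ b ∈ X, f b}

/-- The `k`-th highest value among `w 0, …, w (N-1)` (for `1 ≤ k ≤ N`):
the maximum over sets `T` of `k` bidders of the minimum of `w` on `T`. -/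
noncomputable def kthHighest (N : ℕ) (w : Fin N → ℝ) (k : ℕ) : ℝ :=
  sSup {x : ℝ | ∃ T : Finset (Fin N), T.card = k ∧ x = sInf (w '' (T : Set (Fin N)))}

/-- The `k`-th rank guarantee `R^k_𝓜(v)`. -/
noncomputable def rankGuarantee (M N : ℕ) (Menu : Finset (Bundle M))
    (v : Fin N → Valuation M) (k : ℕ) : ℝ :=
  maxAlloc M Menu fun b => kthHighest N (fun n => v n b) k

/-- The ex-post efficient surplus: the maximum over feasible allocations `X` with
`|X| ≤ N` and injective assignments `ι` of bundles in `X` to bidders of the total value. -/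
noncomputable def surplusEx (M N : ℕ) (Menu : Finset (Bundle M))
    (v : Fin N → Valuation M) : ℝ :=
  sSup {y : ℝ | ∃ X : Finset (Bundle M), Feasible M Menu X ∧ X.card ≤ N ∧
    ∃ ι : Bundle M → Fin N, Set.InjOn ι ↑X ∧ y = ∑ b ∈ X, v (ι b) b}

/-- The average `F̄ = (1/N) ∑ₙ Fₙ` of the bidder-marginals of `F`. -/
noncomputable def avgMarginal (M N : ℕ) (F : Measure (Fin N → Valuation M)) :
    Measure (Valuation M) :=
  (N : ℝ≥0∞)⁻¹ • ∑ n : Fin N, F.map (fun v => v n)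

/-- The ex-ante efficient surplus `V_𝓜(F)`. -/
noncomputable def Vsurplus (M N : ℕ) (Menu : Finset (Bundle M))
    (F : Measure (Fin N → Valuation M)) : ℝ :=
  ∫ v, surplusEx M N Menu v ∂F

/-- A Borel probability measure on valuation profiles (supported on profiles of
valuations bounded by `vbar`). -/
def ProfileOK (M N : ℕ) (vbar : ℝ) (F : Measure (Fin N → Valuation M)) : Prop :=
  IsProbabilityMeasure F ∧ F {v | ∀ n, IsValuation M vbar (v n)} = 1

/-- A Borel probability measure on valuations (supported on valuations bounded by `vbar`). -/
def ValOK (M : ℕ) (vbar : ℝ) (G : Measure (Valuation M)) : Prop :=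
  IsProbabilityMeasure G ∧ G {w | IsValuation M vbar w} = 1

/-- `κ` is a partition of the bundle `b` into nonempty, pairwise disjoint parts. -/
def IsPartitionOf (M : ℕ) (κ : Finset (Bundle M)) (b : Bundle M) : Prop :=
  (∀ c ∈ κ, c ≠ ∅) ∧ (∀ c ∈ κ, ∀ c' ∈ κ, c ≠ c' → Disjoint c c') ∧ κ.sup id = b

/-- Feasibility for homogeneous goods: total number of allocated items is at most `M`. -/
def FeasibleQ (M : ℕ) (Menu X : Finset (Bundle M)) : Prop :=
  X ⊆ Menu ∧ ∑ b ∈ X, b.card ≤ M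

/-- The maximum of `∑ b ∈ X, f b` over homogeneous-goods-feasible allocations `X`. -/
noncomputable def maxAllocQ (M : ℕ) (Menu : Finset (Bundle M)) (f : Bundle M → ℝ) : ℝ :=
  sSup {y : ℝ | ∃ X : Finset (Bundle M), FeasibleQ M Menu X ∧ y = ∑ b ∈ X, f b}

/-- An assignment of pairwise disjoint bundles to the `N` bidders. -/
def IsAssignment (M N : ℕ) (a : Fin N → Bundle M) : Prop :=
  ∀ n n' : Fin N, n ≠ n' → Disjoint (a n) (a n')

/-- An assignment is efficient if it maximizes total value over all assignments. -/
def IsEfficient (M N : ℕ) (v : Fin N → Valuation M) (a : Fin N → Bundle M) : Prop :=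
  IsAssignment M N a ∧
    ∀ a' : Fin N → Bundle M, IsAssignment M N a' → ∑ n, v n (a' n) ≤ ∑ n, v n (a n)

/-- The VCG revenue at the efficient assignment `a`: the sum over bidders `n` of
`max_{assignments to bidders other than n} ∑_{n' ≠ n} v^{n'} − ∑_{n' ≠ n} v^{n'}(a n')`. -/
noncomputable def vcgRevenue (M N : ℕ) (v : Fin N → Valuation M)
    (a : Fin N → Bundle M) : ℝ :=
  ∑ n : Fin N,
    (sSup {y : ℝ | ∃ a' : Fin N → Bundle M, IsAssignment M N a' ∧ a' n = ∅ ∧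
        y = ∑ n' ∈ Finset.univ.erase n, v n' (a' n')}
      - ∑ n' ∈ Finset.univ.erase n, v n' (a n'))

/-- An unbounded valuation: value `0` for the empty bundle and nonnegative values. -/
def IsValuationNN (M : ℕ) (v : Valuation M) : Prop :=
  v ∅ = 0 ∧ ∀ b : Bundle M, 0 ≤ v b

/-- The top-`(k-1)/N` quantile of `v b` under `G`. -/
noncomputable def quantileQ (M N k : ℕ) (G : Measure (Valuation M)) (b : Bundle M) : ℝ :=
  sInf {q : ℝ | 0 ≤ q ∧ G {w | q < w b} ≤ ((k - 1 : ℕ) : ℝ≥0∞) / (N : ℝ≥0∞)}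


/-! ### Auxiliary lemmas for Statement 2 -/

section Aux
open Finset

def feasSet (M : ℕ) (Menu : Finset (Bundle M)) : Finset (Finset (Bundle M)) :=
  Menu.powerset.filter (fun X => ∀ b ∈ X, ∀ b' ∈ X, b ≠ b' → Disjoint b b')

lemma mem_feasSet {M : ℕ} {Menu X : Finset (Bundle M)} :
    X ∈ feasSet M Menu ↔ Feasible M Menu X := by
  simp [feasSet, Feasible, mem_filter, mem_powerset]

lemma feasSet_nonempty (M : ℕ) (Menu : Finset (Bundle M)) : (feasSet M Menu).Nonempty :=
  ⟨∅, mem_feasSet.2 ⟨empty_subset _, by simp⟩⟩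

lemma maxAlloc_eq_sup' (M : ℕ) (Menu : Finset (Bundle M)) (f : Bundle M → ℝ) :
    maxAlloc M Menu f
      = (feasSet M Menu).sup' (feasSet_nonempty M Menu) (fun X => ∑ b ∈ X, f b) := by
  have hset : {y : ℝ | ∃ X : Finset (Bundle M), Feasible M Menu X ∧ y = ∑ b ∈ X, f b}
      = (fun X => ∑ b ∈ X, f b) '' ↑(feasSet M Menu) := by
    ext y
    constructor
    · rintro ⟨X, hX, rfl⟩
      exact ⟨X, by simpa using mem_feasSet.2 hX, rfl⟩
    · rintro ⟨X, hX, rfl⟩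
      exact ⟨X, mem_feasSet.1 (by simpa using hX), rfl⟩
  rw [maxAlloc, hset, ← Finset.sup'_eq_csSup_image]

lemma sum_le_maxAlloc {M : ℕ} {Menu X : Finset (Bundle M)} (f : Bundle M → ℝ)
    (hX : Feasible M Menu X) : ∑ b ∈ X, f b ≤ maxAlloc M Menu f := by
  rw [maxAlloc_eq_sup']
  exact Finset.le_sup' (f := fun X => ∑ b ∈ X, f b) (mem_feasSet.2 hX)

lemma maxAlloc_nonneg {M : ℕ} (Menu : Finset (Bundle M)) (f : Bundle M → ℝ) :
    0 ≤ maxAlloc M Menu f := by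
  have := sum_le_maxAlloc (M := M) (Menu := Menu) (X := ∅) f ⟨empty_subset _, by simp⟩
  simpa using this

lemma exists_maxAlloc {M : ℕ} (Menu : Finset (Bundle M)) (f : Bundle M → ℝ) :
    ∃ X, Feasible M Menu X ∧ maxAlloc M Menu f = ∑ b ∈ X, f b := by
  obtain ⟨X, hX, hEq⟩ := Finset.exists_mem_eq_sup' (feasSet_nonempty M Menu)
    (fun X => ∑ b ∈ X, f b)
  exact ⟨X, mem_feasSet.1 hX, by rw [maxAlloc_eq_sup']; exact hEq⟩

lemma maxAlloc_le {M : ℕ} {Menu : Finset (Bundle M)} {f : Bundle M → ℝ} {vbar : ℝ}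
    (hvbar : 0 ≤ vbar) (hf : ∀ b ∈ Menu, f b ≤ vbar) :
    maxAlloc M Menu f ≤ (Menu.card : ℝ) * vbar := by
  obtain ⟨X, hX, hEq⟩ := exists_maxAlloc Menu f
  rw [hEq]
  calc ∑ b ∈ X, f b ≤ ∑ _b ∈ X, vbar := Finset.sum_le_sum fun b hb => hf b (hX.1 hb)
    _ = (X.card : ℝ) * vbar := by simp [mul_comm]
    _ ≤ (Menu.card : ℝ) * vbar := by
        apply mul_le_mul_of_nonneg_right _ hvbar
        exact_mod_cast Finset.card_le_card hX.1

lemma measurable_maxAlloc (M : ℕ) (Menu : Finset (Bundle M)) :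
    Measurable (fun f : Valuation M => maxAlloc M Menu f) := by
  have h : (fun f : Valuation M => maxAlloc M Menu f)
      = (feasSet M Menu).sup' (feasSet_nonempty M Menu)
          (fun X => fun f : Valuation M => ∑ b ∈ X, f b) := by
    funext f
    rw [maxAlloc_eq_sup', Finset.sup'_apply]
  rw [h]
  exact Finset.measurable_sup' _ fun X _ =>
    Finset.measurable_sum _ fun b _ => measurable_pi_apply b

lemma kthSet_eq (N : ℕ) (w : Fin N → ℝ) (k : ℕ) :
    {x : ℝ | ∃ T : Finset (Fin N), T.card = k ∧ x = sInf (w '' (T : Set (Fin N)))}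
      = (fun T : Finset (Fin N) => sInf (w '' (T : Set (Fin N)))) ''
          ↑((Finset.univ : Finset (Fin N)).powersetCard k) := by
  ext x
  simp only [Set.mem_setOf_eq, Set.mem_image, Finset.mem_coe, Finset.mem_powersetCard_univ]
  constructor
  · rintro ⟨T, hT, rfl⟩; exact ⟨T, hT, rfl⟩
  · rintro ⟨T, hT, rfl⟩; exact ⟨T, hT, rfl⟩

lemma kthHighest_eq_sup' (N : ℕ) (w : Fin N → ℝ) (k : ℕ)
    (h : ((Finset.univ : Finset (Fin N)).powersetCard k).Nonempty) :
    kthHighest N w k = ((Finset.univ : Finset (Fin N)).powersetCard k).sup' h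
      (fun T => sInf (w '' (T : Set (Fin N)))) := by
  rw [kthHighest, kthSet_eq, ← Finset.sup'_eq_csSup_image]

lemma powersetCard_univ_nonempty {N k : ℕ} (hkN : k ≤ N) :
    ((Finset.univ : Finset (Fin N)).powersetCard k).Nonempty := by
  obtain ⟨T, -, hT⟩ := Finset.exists_subset_card_eq (s := (Finset.univ : Finset (Fin N)))
    (n := k) (by simpa using hkN)
  exact ⟨T, Finset.mem_powersetCard_univ.2 hT⟩

lemma sInf_image_eq_inf' {N : ℕ} (w : Fin N → ℝ) {T : Finset (Fin N)} (hT : T.Nonempty) :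
    sInf (w '' (T : Set (Fin N))) = T.inf' hT w :=
  (Finset.inf'_eq_csInf_image T hT w).symm

lemma le_kthHighest {N k : ℕ} (w : Fin N → ℝ) {T : Finset (Fin N)} (hT : T.card = k) :
    sInf (w '' (T : Set (Fin N))) ≤ kthHighest N w k := by
  apply le_csSup
  · rw [kthSet_eq]
    exact (Set.Finite.image _ (Finset.finite_toSet _)).bddAbove
  · exact ⟨T, hT, rfl⟩

lemma kthHighest_nonneg {N k : ℕ} (w : Fin N → ℝ) (hw : ∀ n, 0 ≤ w n)
    (hk1 : 1 ≤ k) (hkN : k ≤ N) : 0 ≤ kthHighest N w k := by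
  obtain ⟨T, hT⟩ := powersetCard_univ_nonempty hkN
  have hTc : T.card = k := Finset.mem_powersetCard_univ.1 hT
  have hTne : T.Nonempty := Finset.card_pos.1 (hTc ▸ hk1)
  refine le_trans ?_ (le_kthHighest w hTc)
  rw [sInf_image_eq_inf']
  exact Finset.le_inf' hTne w fun n _ => hw n

lemma kthHighest_le {N k : ℕ} (w : Fin N → ℝ) {vbar : ℝ} (hw : ∀ n, w n ≤ vbar)
    (hk1 : 1 ≤ k) (hkN : k ≤ N) : kthHighest N w k ≤ vbar := by
  rw [kthHighest_eq_sup' N w k (powersetCard_univ_nonempty hkN)]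
  apply Finset.sup'_le
  intro T hT
  have hTne : T.Nonempty := Finset.card_pos.1 ((Finset.mem_powersetCard_univ.1 hT) ▸ hk1)
  rw [sInf_image_eq_inf' w hTne]
  obtain ⟨n, _, hEq⟩ := Finset.exists_mem_eq_inf' hTne w
  rw [hEq]; exact hw n

lemma card_gt_kthHighest {N k : ℕ} (w : Fin N → ℝ) (hk1 : 1 ≤ k) :
    ((Finset.univ : Finset (Fin N)).filter fun n => kthHighest N w k < w n).card ≤ k - 1 := by
  classical
  by_contra hcon
  push_neg at hcon
  have hk_le : k ≤ ((Finset.univ : Finset (Fin N)).filter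
      fun n => kthHighest N w k < w n).card := by omega
  obtain ⟨T, hTsub, hTc⟩ := Finset.exists_subset_card_eq hk_le
  have hTne : T.Nonempty := Finset.card_pos.1 (hTc ▸ hk1)
  have h1 : sInf (w '' (T : Set (Fin N))) ≤ kthHighest N w k := le_kthHighest w hTc
  rw [sInf_image_eq_inf' w hTne] at h1
  obtain ⟨n, hn, hEq⟩ := Finset.exists_mem_eq_inf' hTne w
  have hlt : kthHighest N w k < w n := (Finset.mem_filter.1 (hTsub hn)).2
  rw [hEq] at h1
  linarith

lemma measurable_kthHighest (N k : ℕ) (hk1 : 1 ≤ k) (hkN : k ≤ N) :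
    Measurable (fun w : Fin N → ℝ => kthHighest N w k) := by
  have h := powersetCard_univ_nonempty (N := N) hkN
  have h2 : (fun w : Fin N → ℝ => kthHighest N w k)
      = ((Finset.univ : Finset (Fin N)).powersetCard k).sup' h
          (fun T => fun w : Fin N → ℝ => sInf (w '' (T : Set (Fin N)))) := by
    funext w
    rw [kthHighest_eq_sup' N w k h, Finset.sup'_apply]
  rw [h2]
  apply Finset.measurable_sup'
  intro T hT
  have hTne : T.Nonempty := Finset.card_pos.1 ((Finset.mem_powersetCard_univ.1 hT) ▸ hk1)
  have h3 : (fun w : Fin N → ℝ => sInf (w '' (T : Set (Fin N))))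
      = T.inf' hTne (fun n => fun w : Fin N → ℝ => w n) := by
    funext w
    rw [Finset.inf'_apply]
    exact sInf_image_eq_inf' w hTne
  rw [h3]
  exact Finset.inf'_induction hTne _ (fun _f hf _g hg => hf.inf hg)
    fun n _ => measurable_pi_apply n

lemma measurable_rankGuarantee (M N : ℕ) (Menu : Finset (Bundle M)) (k : ℕ)
    (hk1 : 1 ≤ k) (hkN : k ≤ N) :
    Measurable (fun v : Fin N → Valuation M => rankGuarantee M N Menu v k) := by
  have h1 : Measurable (fun v : Fin N → Valuation M =>
      (fun b => kthHighest N (fun n => v n b) k : Valuation M)) :=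
    measurable_pi_lambda _ fun b => (measurable_kthHighest N k hk1 hkN).comp
      (measurable_pi_lambda _ fun n => (measurable_pi_apply b).comp (measurable_pi_apply n))
  exact (measurable_maxAlloc M Menu).comp h1

lemma key_pointwise {M N k : ℕ} {vbar : ℝ} (hvbar : 0 ≤ vbar) (Menu : Finset (Bundle M))
    (v : Fin N → Valuation M) (hv : ∀ n, IsValuation M vbar (v n))
    (hk1 : 1 ≤ k) (hkN : k ≤ N) :
    ∑ n, maxAlloc M Menu (v n) ≤
      (N : ℝ) * rankGuarantee M N Menu v k + ((k : ℝ) - 1) * (Menu.card : ℝ) * vbar := by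
  classical
  set q : Bundle M → ℝ := fun b => kthHighest N (fun n => v n b) k with hq
  have hqnn : ∀ b, 0 ≤ q b := fun b =>
    kthHighest_nonneg _ (fun n => ((hv n).2 b).1) hk1 hkN
  have hper : ∀ n : Fin N, maxAlloc M Menu (v n) ≤ rankGuarantee M N Menu v k
      + ∑ b ∈ Menu, (if q b < v n b then vbar else 0) := by
    intro n
    obtain ⟨X, hX, hEq⟩ := exists_maxAlloc Menu (v n)
    rw [hEq]
    have h1 : ∑ b ∈ X, v n b ≤ ∑ b ∈ X, (q b + if q b < v n b then vbar else 0) := by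
      apply Finset.sum_le_sum
      intro b _
      by_cases h : q b < v n b
      · have := ((hv n).2 b).2
        simp only [if_pos h]
        linarith [hqnn b]
      · push_neg at h
        simp only [if_neg (not_lt.2 h)]
        linarith
    rw [Finset.sum_add_distrib] at h1
    have h2 : ∑ b ∈ X, q b ≤ rankGuarantee M N Menu v k := sum_le_maxAlloc q hX
    have h3 : ∑ b ∈ X, (if q b < v n b then vbar else 0)
        ≤ ∑ b ∈ Menu, (if q b < v n b then vbar else 0) := by
      apply Finset.sum_le_sum_of_subset_of_nonneg hX.1
      intro b _ _
      split_ifs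
      exacts [hvbar, le_rfl]
    linarith
  have hcount : ∑ n : Fin N, ∑ b ∈ Menu, (if q b < v n b then vbar else 0)
      ≤ ((k : ℝ) - 1) * (Menu.card : ℝ) * vbar := by
    rw [Finset.sum_comm]
    have hb : ∀ b ∈ Menu, ∑ n : Fin N, (if q b < v n b then vbar else 0)
        ≤ ((k : ℝ) - 1) * vbar := by
      intro b _
      have heq : ∑ n : Fin N, (if q b < v n b then vbar else 0)
          = (((Finset.univ : Finset (Fin N)).filter fun n => q b < v n b).card : ℝ) * vbar := by
        rw [← Finset.sum_filter, Finset.sum_const, nsmul_eq_mul]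
      rw [heq]
      have hc := card_gt_kthHighest (N := N) (fun n => v n b) hk1
      have hcR : ((((Finset.univ : Finset (Fin N)).filter
          fun n => q b < v n b).card : ℕ) : ℝ) ≤ (k : ℝ) - 1 := by
        have h1 : ((((Finset.univ : Finset (Fin N)).filter
            fun n => q b < v n b).card : ℕ) : ℝ) ≤ ((k - 1 : ℕ) : ℝ) := by
          exact_mod_cast hc
        have h2 : ((k - 1 : ℕ) : ℝ) = (k : ℝ) - 1 := by
          have : (1 : ℕ) ≤ k := hk1
          push_cast [this]
          ring
        linarith
      exact mul_le_mul_of_nonneg_right hcR hvbar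
    calc ∑ b ∈ Menu, ∑ n : Fin N, (if q b < v n b then vbar else 0)
        ≤ ∑ _b ∈ Menu, ((k : ℝ) - 1) * vbar := Finset.sum_le_sum hb
      _ = (Menu.card : ℝ) * (((k : ℝ) - 1) * vbar) := by
          rw [Finset.sum_const, nsmul_eq_mul]
      _ = ((k : ℝ) - 1) * (Menu.card : ℝ) * vbar := by ring
  calc ∑ n, maxAlloc M Menu (v n)
      ≤ ∑ n : Fin N, (rankGuarantee M N Menu v k
          + ∑ b ∈ Menu, (if q b < v n b then vbar else 0)) :=
        Finset.sum_le_sum fun n _ => hper n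
    _ = (N : ℝ) * rankGuarantee M N Menu v k
        + ∑ n : Fin N, ∑ b ∈ Menu, (if q b < v n b then vbar else 0) := by
        rw [Finset.sum_add_distrib, Finset.sum_const, nsmul_eq_mul]
        simp
    _ ≤ (N : ℝ) * rankGuarantee M N Menu v k + ((k : ℝ) - 1) * (Menu.card : ℝ) * vbar := by
        linarith

end Aux

/-- For every Borel probability measure `F` on valuation profiles, every menu
`𝓜` and every `1 ≤ k ≤ N`,
`E_F[R^k_𝓜(v)] ≥ E_{F̄}[max_{X ∈ 𝓑(𝓜)} ∑_{b∈X} v_b] − (k−1)·|𝓜|·v̄/N`,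
where `F̄ = (1/N) ∑ₙ Fₙ` is the average of the bidder-marginals of `F`. -/
theorem expected_rank_guarantee_bound
    (M N : ℕ) (hM : 1 ≤ M) (vbar : ℝ) (hvbar : 0 ≤ vbar)
    (F : Measure (Fin N → Valuation M)) [IsProbabilityMeasure F]
    (hF : F {v | ∀ n, IsValuation M vbar (v n)} = 1)
    (Menu : Finset (Bundle M)) (hMenu : IsMenu M Menu)
    (k : ℕ) (hk1 : 1 ≤ k) (hkN : k ≤ N) :
    ∫ v, rankGuarantee M N Menu v k ∂F ≥
      (∫ w, maxAlloc M Menu w ∂(avgMarginal M N F))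
        - ((k : ℝ) - 1) * (Menu.card : ℝ) * vbar / (N : ℝ) := by
  classical
  have hN0 : 0 < N := hk1.trans hkN
  have hNR : (0 : ℝ) < N := by exact_mod_cast hN0
  set C : ℝ := ((k : ℝ) - 1) * (Menu.card : ℝ) * vbar with hC
  -- measurability of the "good" set
  have hGm : MeasurableSet {v : Fin N → Valuation M | ∀ n, IsValuation M vbar (v n)} := by
    have hrepr : {v : Fin N → Valuation M | ∀ n, IsValuation M vbar (v n)}
        = ⋂ n : Fin N, (((fun v : Fin N → Valuation M => v n ∅) ⁻¹' {0})
            ∩ ⋂ b : Bundle M, ((fun v : Fin N → Valuation M => v n b) ⁻¹' Set.Icc 0 vbar)) := by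
      ext v
      simp [IsValuation, Set.mem_Icc]
    rw [hrepr]
    apply MeasurableSet.iInter
    intro n
    have hnb : ∀ b : Bundle M, Measurable (fun v : Fin N → Valuation M => v n b) :=
      fun b => (measurable_pi_apply b).comp (measurable_pi_apply n)
    exact ((hnb ∅) (measurableSet_singleton 0)).inter
      (MeasurableSet.iInter fun b => (hnb b) measurableSet_Icc)
  have hae : ∀ᵐ v ∂F, ∀ n, IsValuation M vbar (v n) := by
    rw [MeasureTheory.ae_iff]
    have hcompl : F {v : Fin N → Valuation M | ∀ n, IsValuation M vbar (v n)}ᶜ = 0 := by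
      rw [measure_compl hGm (measure_ne_top F _), hF, measure_univ]
      simp
    simpa [Set.compl_setOf] using hcompl
  -- integrability
  have hintB : ∀ n : Fin N,
      Integrable (fun v : Fin N → Valuation M => maxAlloc M Menu (v n)) F := by
    intro n
    have hm : Measurable fun v : Fin N → Valuation M => maxAlloc M Menu (v n) :=
      (measurable_maxAlloc M Menu).comp (measurable_pi_apply n)
    apply Integrable.mono' (integrable_const ((Menu.card : ℝ) * vbar)) hm.aestronglyMeasurable
    filter_upwards [hae] with v hv
    rw [Real.norm_eq_abs, abs_of_nonneg (maxAlloc_nonneg Menu (v n))]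
    exact maxAlloc_le hvbar fun b _ => ((hv n).2 b).2
  have hintR : Integrable (fun v : Fin N → Valuation M => rankGuarantee M N Menu v k) F := by
    apply Integrable.mono' (integrable_const ((Menu.card : ℝ) * vbar))
      (measurable_rankGuarantee M N Menu k hk1 hkN).aestronglyMeasurable
    filter_upwards [hae] with v hv
    simp only [rankGuarantee]
    rw [Real.norm_eq_abs, abs_of_nonneg (maxAlloc_nonneg Menu _)]
    apply maxAlloc_le hvbar
    intro b _
    exact kthHighest_le (fun n => v n b) (fun n => ((hv n).2 b).2) hk1 hkN
  -- map integrals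
  have hmapint : ∀ n : Fin N,
      ∫ w, maxAlloc M Menu w ∂(F.map (fun v => v n)) = ∫ v, maxAlloc M Menu (v n) ∂F :=
    fun n => integral_map (measurable_pi_apply n).aemeasurable
      (measurable_maxAlloc M Menu).aestronglyMeasurable
  have hintMap : ∀ n : Fin N, Integrable (fun w => maxAlloc M Menu w) (F.map (fun v => v n)) := by
    intro n
    rw [integrable_map_measure (measurable_maxAlloc M Menu).aestronglyMeasurable
      (measurable_pi_apply n).aemeasurable]
    exact hintB n
  have h1 : ∫ w, maxAlloc M Menu w ∂(avgMarginal M N F)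
      = (N : ℝ)⁻¹ * ∑ n : Fin N, ∫ v, maxAlloc M Menu (v n) ∂F := by
    rw [avgMarginal, integral_smul_measure,
      integral_finset_sum_measure (fun n _ => hintMap n)]
    simp [hmapint, ENNReal.toReal_inv, smul_eq_mul]
  have h2 : ∑ n : Fin N, ∫ v, maxAlloc M Menu (v n) ∂F
      = ∫ v, ∑ n, maxAlloc M Menu (v n) ∂F :=
    (integral_finset_sum _ fun n _ => hintB n).symm
  have h3 : ∫ v, ∑ n, maxAlloc M Menu (v n) ∂F
      ≤ ∫ v, ((N : ℝ) * rankGuarantee M N Menu v k + C) ∂F := by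
    apply integral_mono_ae (integrable_finset_sum _ fun n _ => hintB n)
      ((hintR.const_mul _).add (integrable_const _))
    filter_upwards [hae] with v hv
    exact key_pointwise hvbar Menu v hv hk1 hkN
  have h4 : ∫ v, ((N : ℝ) * rankGuarantee M N Menu v k + C) ∂F
      = (N : ℝ) * (∫ v, rankGuarantee M N Menu v k ∂F) + C := by
    rw [integral_add (hintR.const_mul _) (integrable_const _), integral_const_mul,
      integral_const, probReal_univ]
    simp
  have h5 : ∫ w, maxAlloc M Menu w ∂(avgMarginal M N F)
      ≤ (∫ v, rankGuarantee M N Menu v k ∂F) + C / N := by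
    rw [h1, h2]
    have hmul : (N : ℝ)⁻¹ * (∫ v, ∑ n, maxAlloc M Menu (v n) ∂F)
        ≤ (N : ℝ)⁻¹ * ((N : ℝ) * (∫ v, rankGuarantee M N Menu v k ∂F) + C) := by
      apply mul_le_mul_of_nonneg_left (h3.trans_eq h4) (by positivity)
    refine hmul.trans_eq ?_
    field_simp
  have hCeq : ((k : ℝ) - 1) * (Menu.card : ℝ) * vbar / (N : ℝ) = C / N := rfl
  rw [ge_iff_le, hCeq]
  linarith

end RankGuaranteedAuctions
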